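/- As operator identities on S(ℝ², ℂ): [a⁻, a⁺] = Id, a⁻∘a⁺ = H + (1/2)·Id, and a⁺∘a⁻ = H − (1/2)·Id. -/

import Mathlib

open MeasureTheory Complex
open scoped ENNReal

noncomputable section

/-- `p_x = −i·ħ₀·∂_x`. -/
def pxOp (hb : ℝ) (f : ℝ × ℝ → ℂ) : ℝ × ℝ → ℂ := fun p =>
  -Complex.I * hb * fderiv ℝ f p (1, 0)

/-- `p_y = −i·ħ₀·∂_y`. -/
def pyOp (hb : ℝ) (f : ℝ × ℝ → ℂ) : ℝ × ℝ → ℂ := fun p =>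
  -Complex.I * hb * fderiv ℝ f p (0, 1)

/-- `Π_x = ((1−r)ħ₀B₀/(ħ₀−rθ₀B₀))·y + (((r+s−rs)θ₀B₀−ħ₀)/(rθ₀B₀−ħ₀))·p_x`. -/
def PixOp (hb th B r s : ℝ) (f : ℝ × ℝ → ℂ) : ℝ × ℝ → ℂ := fun p =>
  ((1 - r) * hb * B / (hb - r * th * B)) * p.2 * f p +
    (((r + s - r * s) * th * B - hb) / (r * th * B - hb)) * pxOp hb f p

/-- `Π_y = −rB₀·x + (1 + r(s−1)θ₀B₀/ħ₀)·p_y`. -/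
def PiyOp (hb th B r s : ℝ) (f : ℝ × ℝ → ℂ) : ℝ × ℝ → ℂ := fun p =>
  -(r * B) * p.1 * f p + (1 + r * (s - 1) * th * B / hb) * pyOp hb f p

/-- `Π̃_x = Π_x / √(ħ₀B₀)`. -/
def PixT (hb th B r s : ℝ) (f : ℝ × ℝ → ℂ) : ℝ × ℝ → ℂ := fun p =>
  (Real.sqrt (hb * B))⁻¹ * PixOp hb th B r s f p

/-- `Π̃_y = Π_y / √(ħ₀B₀)`. -/
def PiyT (hb th B r s : ℝ) (f : ℝ × ℝ → ℂ) : ℝ × ℝ → ℂ := fun p =>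
  (Real.sqrt (hb * B))⁻¹ * PiyOp hb th B r s f p

/-- `a⁻ = (Π̃_x + i Π̃_y)/√2`. -/
def aMinus (hb th B r s : ℝ) (f : ℝ × ℝ → ℂ) : ℝ × ℝ → ℂ := fun p =>
  (PixT hb th B r s f p + Complex.I * PiyT hb th B r s f p) / Real.sqrt 2

/-- `a⁺ = (Π̃_x − i Π̃_y)/√2`. -/
def aPlus (hb th B r s : ℝ) (f : ℝ × ℝ → ℂ) : ℝ × ℝ → ℂ := fun p =>
  (PixT hb th B r s f p - Complex.I * PiyT hb th B r s f p) / Real.sqrt 2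

/-- `H = ((Π̃_x)² + (Π̃_y)²)/2`. -/
def Hop (hb th B r s : ℝ) (f : ℝ × ℝ → ℂ) : ℝ × ℝ → ℂ := fun p =>
  (PixT hb th B r s (PixT hb th B r s f) p + PiyT hb th B r s (PiyT hb th B r s f) p) / 2

def opC (a b c d : ℂ) (g : ℝ × ℝ → ℂ) : ℝ × ℝ → ℂ := fun q =>
  a * (q.1 : ℂ) * g q + b * (q.2 : ℂ) * g q +
    c * fderiv ℝ g q (1, 0) + d * fderiv ℝ g q (0, 1)

def phi1 : (ℝ × ℝ) →L[ℝ] ℂ := Complex.ofRealCLM.comp (ContinuousLinearMap.fst ℝ ℝ ℝ)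
def phi2 : (ℝ × ℝ) →L[ℝ] ℂ := Complex.ofRealCLM.comp (ContinuousLinearMap.snd ℝ ℝ ℝ)

lemma hasFD_coord1 (p : ℝ × ℝ) : HasFDerivAt (fun q : ℝ × ℝ => (q.1 : ℂ)) phi1 p :=
  phi1.hasFDerivAt

lemma hasFD_coord2 (p : ℝ × ℝ) : HasFDerivAt (fun q : ℝ × ℝ => (q.2 : ℂ)) phi2 p :=
  phi2.hasFDerivAt

lemma hasFD_fderiv_apply (g : ℝ × ℝ → ℂ) (hg : ContDiff ℝ (⊤ : ℕ∞) g) (v p : ℝ × ℝ) :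
    HasFDerivAt (fun q => fderiv ℝ g q v)
      ((ContinuousLinearMap.apply ℝ ℂ v).comp (fderiv ℝ (fderiv ℝ g) p)) p := by
  have h1 : HasFDerivAt (fderiv ℝ g) (fderiv ℝ (fderiv ℝ g) p) p :=
    (((hg.fderiv_right (m := (⊤:ℕ∞)) (by simp)).differentiable (by simp)) p).hasFDerivAt
  exact ((ContinuousLinearMap.apply ℝ ℂ v).hasFDerivAt.comp p h1)

lemma fderiv_op_apply (a b c d : ℂ) (g : ℝ × ℝ → ℂ) (hg : ContDiff ℝ (⊤ : ℕ∞) g) (p v : ℝ × ℝ) :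
    fderiv ℝ (opC a b c d g) p v =
      a * (v.1 : ℂ) * g p + b * (v.2 : ℂ) * g p +
        (a * (p.1 : ℂ) + b * (p.2 : ℂ)) * fderiv ℝ g p v +
        c * fderiv ℝ (fderiv ℝ g) p v (1, 0) + d * fderiv ℝ (fderiv ℝ g) p v (0, 1) := by
  have hgd : HasFDerivAt g (fderiv ℝ g p) p := ((hg.differentiable (by simp)) p).hasFDerivAt
  have h1 := (((hasFD_coord1 p).const_mul a).mul hgd)
  have h2 := (((hasFD_coord2 p).const_mul b).mul hgd)
  have h3 := (hasFD_fderiv_apply g hg (1, 0) p).const_mul c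
  have h4 := (hasFD_fderiv_apply g hg (0, 1) p).const_mul d
  have htot := ((h1.add h2).add h3).add h4
  have : fderiv ℝ (opC a b c d g) p = _ := htot.fderiv
  rw [this]
  simp only [ContinuousLinearMap.add_apply, ContinuousLinearMap.smul_apply,
    ContinuousLinearMap.comp_apply, ContinuousLinearMap.apply_apply, smul_eq_mul, phi1, phi2,
    ContinuousLinearMap.coe_fst', ContinuousLinearMap.coe_snd', Complex.ofRealCLM_apply]
  ring

lemma op_op (a b c d a' b' c' d' : ℂ) (g : ℝ × ℝ → ℂ) (hg : ContDiff ℝ (⊤ : ℕ∞) g) (p : ℝ × ℝ) :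
    opC a b c d (opC a' b' c' d' g) p =
      a * (p.1 : ℂ) * (a' * (p.1 : ℂ) * g p + b' * (p.2 : ℂ) * g p +
          c' * fderiv ℝ g p (1, 0) + d' * fderiv ℝ g p (0, 1)) +
      b * (p.2 : ℂ) * (a' * (p.1 : ℂ) * g p + b' * (p.2 : ℂ) * g p +
          c' * fderiv ℝ g p (1, 0) + d' * fderiv ℝ g p (0, 1)) +
      c * (a' * g p + (a' * (p.1 : ℂ) + b' * (p.2 : ℂ)) * fderiv ℝ g p (1, 0) +
          c' * fderiv ℝ (fderiv ℝ g) p (1, 0) (1, 0) + d' * fderiv ℝ (fderiv ℝ g) p (1, 0) (0, 1)) +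
      d * (b' * g p + (a' * (p.1 : ℂ) + b' * (p.2 : ℂ)) * fderiv ℝ g p (0, 1) +
          c' * fderiv ℝ (fderiv ℝ g) p (0, 1) (1, 0) + d' * fderiv ℝ (fderiv ℝ g) p (0, 1) (0, 1)) := by
  have e1 := fderiv_op_apply a' b' c' d' g hg p (1, 0)
  have e2 := fderiv_op_apply a' b' c' d' g hg p (0, 1)
  show a * (p.1 : ℂ) * opC a' b' c' d' g p + b * (p.2 : ℂ) * opC a' b' c' d' g p +
      c * fderiv ℝ (opC a' b' c' d' g) p (1, 0) + d * fderiv ℝ (opC a' b' c' d' g) p (0, 1) = _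
  rw [e1, e2]
  simp only [opC]
  push_cast
  ring

-- coefficients
def c1C (hb B r : ℝ) : ℂ := ((Real.sqrt (hb * B) : ℝ) : ℂ)⁻¹ * ((-(r * B) : ℝ) : ℂ)
def c2C (hb th B r : ℝ) : ℂ :=
  ((Real.sqrt (hb * B) : ℝ) : ℂ)⁻¹ * (((1 - r) * hb * B / (hb - r * th * B) : ℝ) : ℂ)
def c3C (hb th B r s : ℝ) : ℂ :=
  ((Real.sqrt (hb * B) : ℝ) : ℂ)⁻¹ *
    ((((r + s - r * s) * th * B - hb) / (r * th * B - hb) : ℝ) : ℂ) * (-Complex.I * hb)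
def c4C (hb th B r s : ℝ) : ℂ :=
  ((Real.sqrt (hb * B) : ℝ) : ℂ)⁻¹ * ((1 + r * (s - 1) * th * B / hb : ℝ) : ℂ) * (-Complex.I * hb)
def bC : ℂ := ((Real.sqrt 2 : ℝ) : ℂ)⁻¹

lemma PixT_eq (hb th B r s : ℝ) (g : ℝ × ℝ → ℂ) :
    PixT hb th B r s g = opC 0 (c2C hb th B r) (c3C hb th B r s) 0 g := by
  funext q
  simp only [PixT, PixOp, pxOp, opC, c2C, c3C]
  push_cast
  ring

lemma PiyT_eq (hb th B r s : ℝ) (g : ℝ × ℝ → ℂ) :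
    PiyT hb th B r s g = opC (c1C hb B r) 0 0 (c4C hb th B r s) g := by
  funext q
  simp only [PiyT, PiyOp, pyOp, opC, c1C, c4C]
  push_cast
  ring

lemma aMinus_eq (hb th B r s : ℝ) (g : ℝ × ℝ → ℂ) :
    aMinus hb th B r s g = opC (Complex.I * bC * c1C hb B r) (bC * c2C hb th B r)
      (bC * c3C hb th B r s) (Complex.I * bC * c4C hb th B r s) g := by
  funext q
  simp only [aMinus, PixT, PixOp, pxOp, PiyT, PiyOp, pyOp, opC, c1C, c2C, c3C, c4C, bC]
  push_cast
  ring

lemma aPlus_eq (hb th B r s : ℝ) (g : ℝ × ℝ → ℂ) :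
    aPlus hb th B r s g = opC (-(Complex.I * bC * c1C hb B r)) (bC * c2C hb th B r)
      (bC * c3C hb th B r s) (-(Complex.I * bC * c4C hb th B r s)) g := by
  funext q
  simp only [aPlus, PixT, PixOp, pxOp, PiyT, PiyOp, pyOp, opC, c1C, c2C, c3C, c4C, bC]
  push_cast
  ring

lemma bC_sq : bC ^ 2 = 1 / 2 := by
  have : ((Real.sqrt 2 : ℝ) : ℂ) ^ 2 = 2 := by
    norm_cast
    exact Real.sq_sqrt (by norm_num)
  simp only [bC]
  rw [inv_pow, this]
  norm_num

lemma kk (hb th B r s : ℝ) (hhb : hb ≠ 0) (hrs : r * th * B ≠ hb) (hpos : 0 < hb * B) :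
    c2C hb th B r * c4C hb th B r s - c1C hb B r * c3C hb th B r s = -Complex.I := by
  have h1 : hb - r * th * B ≠ 0 := sub_ne_zero.mpr (Ne.symm hrs)
  have h2 : r * th * B - hb ≠ 0 := sub_ne_zero.mpr hrs
  have hre : ((1 - r) * hb * B / (hb - r * th * B)) * (1 + r * (s - 1) * th * B / hb) -
      (-(r * B)) * (((r + s - r * s) * th * B - hb) / (r * th * B - hb)) = B := by
    rw [show r * th * B - hb = -(hb - r * th * B) by ring, div_neg]
    have hu : (hb - r * th * B) * (hb - r * th * B)⁻¹ = 1 := mul_inv_cancel₀ h1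
    have hv : hb * hb⁻¹ = 1 := mul_inv_cancel₀ hhb
    linear_combination B * hu + (1 - r) * r * (s - 1) * th * B ^ 2 * (hb - r * th * B)⁻¹ * hv
  have hreC := congrArg (Complex.ofReal) hre
  push_cast at hreC
  have hsq : ((Real.sqrt (hb * B) : ℝ) : ℂ) * ((Real.sqrt (hb * B) : ℝ) : ℂ) = (hb : ℂ) * B := by
    norm_cast
    exact Real.mul_self_sqrt hpos.le
  have hsn : ((Real.sqrt (hb * B) : ℝ) : ℂ) ≠ 0 := by
    norm_cast
    exact ne_of_gt (Real.sqrt_pos.mpr hpos)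
  have hT : ((Real.sqrt (hb * B) : ℝ) : ℂ)⁻¹ * ((Real.sqrt (hb * B) : ℝ) : ℂ)⁻¹ *
      ((hb : ℂ) * B) = 1 := by
    rw [← hsq]
    have hS1 : ((Real.sqrt (hb * B) : ℝ) : ℂ)⁻¹ * ((Real.sqrt (hb * B) : ℝ) : ℂ) = 1 :=
      inv_mul_cancel₀ hsn
    linear_combination (((Real.sqrt (hb * B) : ℝ) : ℂ)⁻¹ * ((Real.sqrt (hb * B) : ℝ) : ℂ) + 1) * hS1
  simp only [c1C, c2C, c3C, c4C]
  push_cast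
  linear_combination (((Real.sqrt (hb * B) : ℝ) : ℂ)⁻¹ * ((Real.sqrt (hb * B) : ℝ) : ℂ)⁻¹ *
    (-Complex.I * hb)) * hreC + (-Complex.I) * hT

lemma symH (g : ℝ × ℝ → ℂ) (hg : ContDiff ℝ (⊤ : ℕ∞) g) (p : ℝ × ℝ) :
    fderiv ℝ (fderiv ℝ g) p (0, 1) (1, 0) = fderiv ℝ (fderiv ℝ g) p (1, 0) (0, 1) :=
  (hg.contDiffAt.isSymmSndFDerivAt (by rw [minSmoothness_of_isRCLikeNormedField]; exact WithTop.coe_le_coe.mpr le_top)) (0, 1) (1, 0)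

theorem stmt11 (hb th B r s : ℝ) (hhb : hb ≠ 0) (hth : th ≠ 0) (hB : B ≠ 0)
    (hnd : hb - th * B ≠ 0) (hrs : r * th * B ≠ hb) (hpos : 0 < hb * B) :
    -- `[a⁻, a⁺] = Id`
    (∀ (f : SchwartzMap (ℝ × ℝ) ℂ) (p : ℝ × ℝ),
      aMinus hb th B r s (aPlus hb th B r s ⇑f) p -
          aPlus hb th B r s (aMinus hb th B r s ⇑f) p = f p) ∧
    -- `a⁻ ∘ a⁺ = H + (1/2)·Id`
    (∀ (f : SchwartzMap (ℝ × ℝ) ℂ) (p : ℝ × ℝ),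
      aMinus hb th B r s (aPlus hb th B r s ⇑f) p = Hop hb th B r s ⇑f p + (1 / 2) * f p) ∧
    -- `a⁺ ∘ a⁻ = H − (1/2)·Id`
    (∀ (f : SchwartzMap (ℝ × ℝ) ℂ) (p : ℝ × ℝ),
      aPlus hb th B r s (aMinus hb th B r s ⇑f) p = Hop hb th B r s ⇑f p - (1 / 2) * f p) := by
  have hkk := kk hb th B r s hhb hrs hpos
  have hbs := bC_sq
  have hI : Complex.I ^ 2 = -1 := Complex.I_sq
  have key2 : ∀ (f : SchwartzMap (ℝ × ℝ) ℂ) (p : ℝ × ℝ),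
      aMinus hb th B r s (aPlus hb th B r s ⇑f) p = Hop hb th B r s ⇑f p + (1 / 2) * f p := by
    intro f p
    have hg : ContDiff ℝ (⊤ : ℕ∞) ⇑f := f.smooth ⊤
    simp only [Hop, aPlus_eq, aMinus_eq, PixT_eq, PiyT_eq]
    rw [op_op _ _ _ _ _ _ _ _ _ hg p, op_op _ _ _ _ _ _ _ _ _ hg p,
      op_op _ _ _ _ _ _ _ _ _ hg p, symH ⇑f hg p]
    set G := f p
    set X := ((p.1 : ℝ) : ℂ)
    set Y := ((p.2 : ℝ) : ℂ)
    set G1 := fderiv ℝ (⇑f) p (1, 0)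
    set G2 := fderiv ℝ (⇑f) p (0, 1)
    set H11 := fderiv ℝ (fderiv ℝ (⇑f)) p (1, 0) (1, 0)
    set H12 := fderiv ℝ (fderiv ℝ (⇑f)) p (1, 0) (0, 1)
    set H22 := fderiv ℝ (fderiv ℝ (⇑f)) p (0, 1) (0, 1)
    set c1 := c1C hb B r
    set c2 := c2C hb th B r
    set c3 := c3C hb th B r s
    set c4 := c4C hb th B r s
    linear_combination (G * X ^ 2 * c1 ^ 2 + G * Y ^ 2 * c2 ^ 2 + 2 * X * G2 * c1 * c4 +
        2 * Y * G1 * c2 * c3 + G + H11 * c3 ^ 2 + H22 * c4 ^ 2) * hbs +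
      (-(bC ^ 2) * (G * X ^ 2 * c1 ^ 2 + 2 * X * G2 * c1 * c4 + G + H22 * c4 ^ 2)) * hI +
      (Complex.I * bC ^ 2 * G) * hkk
  have key3 : ∀ (f : SchwartzMap (ℝ × ℝ) ℂ) (p : ℝ × ℝ),
      aPlus hb th B r s (aMinus hb th B r s ⇑f) p = Hop hb th B r s ⇑f p - (1 / 2) * f p := by
    intro f p
    have hg : ContDiff ℝ (⊤ : ℕ∞) ⇑f := f.smooth ⊤
    simp only [Hop, aPlus_eq, aMinus_eq, PixT_eq, PiyT_eq]
    rw [op_op _ _ _ _ _ _ _ _ _ hg p, op_op _ _ _ _ _ _ _ _ _ hg p,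
      op_op _ _ _ _ _ _ _ _ _ hg p, symH ⇑f hg p]
    set G := f p
    set X := ((p.1 : ℝ) : ℂ)
    set Y := ((p.2 : ℝ) : ℂ)
    set G1 := fderiv ℝ (⇑f) p (1, 0)
    set G2 := fderiv ℝ (⇑f) p (0, 1)
    set H11 := fderiv ℝ (fderiv ℝ (⇑f)) p (1, 0) (1, 0)
    set H22 := fderiv ℝ (fderiv ℝ (⇑f)) p (0, 1) (0, 1)
    set c1 := c1C hb B r
    set c2 := c2C hb th B r
    set c3 := c3C hb th B r s
    set c4 := c4C hb th B r s
    linear_combination (G * X ^ 2 * c1 ^ 2 + G * Y ^ 2 * c2 ^ 2 + 2 * X * G2 * c1 * c4 +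
        2 * Y * G1 * c2 * c3 - G + H11 * c3 ^ 2 + H22 * c4 ^ 2) * hbs +
      (-(bC ^ 2) * (G * X ^ 2 * c1 ^ 2 + 2 * X * G2 * c1 * c4 - G + H22 * c4 ^ 2)) * hI +
      (-(Complex.I * bC ^ 2 * G)) * hkk
  refine ⟨fun f p => ?_, key2, key3⟩
  rw [key2 f p, key3 f p]
  ring
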